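/- An n×n superboolean matrix A is nonsingular (i.e., its permanent equals 1) if and only if there exist permutations of rows and of columns (applied independently) bringing A to a lower-triangular form in which all diagonal entries are 1 and all entries strictly above the diagonal are 0. -/

import Mathlib

open scoped Classical

/-- The superboolean semiring `SB = {0, 1, 1^ν}`. -/
def SB := Fin 3

instance : DecidableEq SB := inferInstanceAs (DecidableEq (Fin 3))
instance : Fintype SB := inferInstanceAs (Fintype (Fin 3))

def SB.zero : SB := (0 : Fin 3)
def SB.one : SB := (1 : Fin 3)
/-- The ghost element `1^ν`. -/
def SB.nu : SB := (2 : Fin 3)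

def SB.val (a : SB) : ℕ := Fin.val a

instance : Zero SB := ⟨SB.zero⟩
instance : One SB := ⟨SB.one⟩

def SB.add (a b : SB) : SB := (⟨min (a.val + b.val) 2, by omega⟩ : Fin 3)
def SB.mul (a b : SB) : SB := (⟨min (a.val * b.val) 2, by omega⟩ : Fin 3)

instance : Add SB := ⟨SB.add⟩
instance : Mul SB := ⟨SB.mul⟩

instance : AddCommMonoid SB where
  add := (· + ·)
  add_assoc := by decide
  zero_add := by decide
  add_zero := by decide
  add_comm := by decide
  nsmul := nsmulRec

instance : CommMonoid SB where
  mul := (· * ·)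
  mul_assoc := by decide
  one_mul := by decide
  mul_one := by decide
  mul_comm := by decide
  npow := npowRec

/-- The permanent of a square superboolean matrix. -/
def sbPer {n : ℕ} (A : Matrix (Fin n) (Fin n) SB) : SB :=
  ∑ π : Equiv.Perm (Fin n), ∏ i, A (π i) i

/-- A square superboolean matrix is nonsingular when its permanent is `1`. -/
def Nonsingular {n : ℕ} (A : Matrix (Fin n) (Fin n) SB) : Prop := sbPer A = SB.one

/-- Membership in the ghost ideal `{0, 1^ν}`. -/
def SB.IsGhost (a : SB) : Prop := a = SB.zero ∨ a = SB.nu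

/-- A family of superboolean vectors is dependent if some nontrivial boolean
combination of them lies entirely in the ghost ideal. -/
def SBDep {κ ι : Type*} [Fintype κ] (v : κ → ι → SB) : Prop :=
  ∃ α : κ → SB, (∀ k, α k = SB.zero ∨ α k = SB.one) ∧ (∃ k, α k ≠ SB.zero) ∧
    ∀ j : ι, SB.IsGhost (∑ k, α k * v k j)

/-- Independence of a family of superboolean vectors. -/
def SBIndep {κ ι : Type*} [Fintype κ] (v : κ → ι → SB) : Prop := ¬ SBDep v

/-- A matrix is boolean if none of its entries is the ghost `1^ν`. -/
def IsBooleanMat {ι κ : Type*} (A : Matrix ι κ SB) : Prop := ∀ i j, A i j ≠ SB.nu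

lemma SB.add_eq_one_iff : ∀ a b : SB, a + b = SB.one ↔ (a = SB.one ∧ b = SB.zero) ∨ (a = SB.zero ∧ b = SB.one) := by decide
lemma SB.add_eq_zero_iff : ∀ a b : SB, a + b = SB.zero ↔ a = SB.zero ∧ b = SB.zero := by decide
lemma SB.mul_eq_one_iff : ∀ a b : SB, a * b = SB.one ↔ a = SB.one ∧ b = SB.one := by decide
lemma SB.mul_eq_zero_iff : ∀ a b : SB, a * b = SB.zero ↔ a = SB.zero ∨ b = SB.zero := by decide
lemma SB.zero_def : (0 : SB) = SB.zero := rfl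
lemma SB.one_def : (1 : SB) = SB.one := rfl
lemma SB.one_ne_zero' : SB.one ≠ SB.zero := by decide

lemma sbSum_eq_zero_iff {α : Type*} (s : Finset α) (f : α → SB) :
    (∑ x ∈ s, f x) = SB.zero ↔ ∀ a ∈ s, f a = SB.zero := by
  induction s using Finset.cons_induction with
  | empty => simp [SB.zero_def]
  | cons a s ha ih =>
      rw [Finset.sum_cons, SB.add_eq_zero_iff, ih]
      simp [and_comm]

lemma sbSum_eq_one_iff {α : Type*} (s : Finset α) (f : α → SB) :
    (∑ x ∈ s, f x) = SB.one ↔ ∃ a ∈ s, f a = SB.one ∧ ∀ b ∈ s, b ≠ a → f b = SB.zero := by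
  induction s using Finset.cons_induction with
  | empty => simpa [SB.zero_def] using SB.one_ne_zero'.symm
  | cons a s ha ih =>
      rw [Finset.sum_cons, SB.add_eq_one_iff, ih, sbSum_eq_zero_iff]
      constructor
      · rintro (⟨h1, h0⟩ | ⟨h0, b, hb, hb1, hb0⟩)
        · exact ⟨a, Finset.mem_cons_self a s, h1, fun c hc hca => by
            rcases Finset.mem_cons.1 hc with rfl | hc
            · exact absurd rfl hca
            · exact h0 c hc⟩
        · refine ⟨b, Finset.mem_cons_of_mem hb, hb1, fun c hc hcb => ?_⟩
          rcases Finset.mem_cons.1 hc with rfl | hc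
          · exact h0
          · exact hb0 c hc hcb
      · rintro ⟨b, hb, hb1, hb0⟩
        rcases Finset.mem_cons.1 hb with rfl | hb
        · exact Or.inl ⟨hb1, fun c hc => hb0 c (Finset.mem_cons_of_mem hc) (fun h => ha (h ▸ hc))⟩
        · exact Or.inr ⟨hb0 a (Finset.mem_cons_self a s) (fun h => ha (h ▸ hb)),
            b, hb, hb1, fun c hc hcb => hb0 c (Finset.mem_cons_of_mem hc) hcb⟩

lemma sbProd_eq_one_iff {α : Type*} (s : Finset α) (f : α → SB) :
    (∏ x ∈ s, f x) = SB.one ↔ ∀ a ∈ s, f a = SB.one := by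
  induction s using Finset.cons_induction with
  | empty => simp [SB.one_def]
  | cons a s ha ih =>
      rw [Finset.prod_cons, SB.mul_eq_one_iff, ih]
      simp [and_comm]

lemma sbProd_eq_zero_iff {α : Type*} (s : Finset α) (f : α → SB) :
    (∏ x ∈ s, f x) = SB.zero ↔ ∃ a ∈ s, f a = SB.zero := by
  induction s using Finset.cons_induction with
  | empty => simpa [SB.one_def] using SB.one_ne_zero'
  | cons a s ha ih =>
      rw [Finset.prod_cons, SB.mul_eq_zero_iff, ih]
      simp [Finset.mem_cons]

def UniqPerm {n : ℕ} (A : Matrix (Fin n) (Fin n) SB) (π : Equiv.Perm (Fin n)) : Prop :=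
  (∀ i, A (π i) i = SB.one) ∧ ∀ ρ : Equiv.Perm (Fin n), (∀ i, A (ρ i) i ≠ SB.zero) → ρ = π

lemma sbPer_eq_one_iff {n : ℕ} (A : Matrix (Fin n) (Fin n) SB) :
    sbPer A = SB.one ↔ ∃ π, UniqPerm A π := by
  rw [sbPer, sbSum_eq_one_iff]
  constructor
  · rintro ⟨π, -, hπ1, hπ0⟩
    refine ⟨π, fun i => (sbProd_eq_one_iff _ _).1 hπ1 i (Finset.mem_univ i), ?_⟩
    intro ρ hρ
    by_contra hne
    rcases (sbProd_eq_zero_iff _ _).1 (hπ0 ρ (Finset.mem_univ ρ) hne) with ⟨i, -, hi⟩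
    exact hρ i hi
  · rintro ⟨π, h1, huniq⟩
    refine ⟨π, Finset.mem_univ π, (sbProd_eq_one_iff _ _).2 (fun i _ => h1 i), ?_⟩
    rintro ρ - hne
    rw [sbProd_eq_zero_iff]
    by_contra h
    push_neg at h
    exact hne (huniq ρ (fun i => h i (Finset.mem_univ i)))

lemma perm_eq_one_of_le {n : ℕ} (g : Equiv.Perm (Fin n)) (h : ∀ k, k ≤ g k) : g = 1 := by
  have hsum : ∑ k : Fin n, ((g k : ℕ)) = ∑ k : Fin n, (k : ℕ) := by
    exact Equiv.sum_comp g (fun k => (k : ℕ))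
  have hle : ∀ k : Fin n, k ∈ Finset.univ → ((k : ℕ)) ≤ ((g k : ℕ)) := fun k _ => h k
  have := (Finset.sum_eq_sum_iff_of_le hle).1 hsum.symm
  ext k
  exact (this k (Finset.mem_univ k)).symm

lemma uniq_of_triangular {n : ℕ} (A : Matrix (Fin n) (Fin n) SB)
    (σ τ : Equiv.Perm (Fin n))
    (hd : ∀ i : Fin n, A (σ i) (τ i) = SB.one)
    (hu : ∀ i j : Fin n, i < j → A (σ i) (τ j) = SB.zero) :
    UniqPerm A (τ.symm.trans σ) := by
  constructor
  · intro j
    have : A (σ (τ.symm j)) (τ (τ.symm j)) = SB.one := hd (τ.symm j)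
    simpa using this
  · intro ρ hρ
    set g : Equiv.Perm (Fin n) := τ.trans (ρ.trans σ.symm) with hg
    have hge : ∀ k, k ≤ g k := by
      intro k
      by_contra hlt
      push_neg at hlt
      have h0 := hu (g k) k hlt
      have : A (ρ (τ k)) (τ k) = SB.zero := by
        have : σ (g k) = ρ (τ k) := by simp [hg]
        rwa [this] at h0
      exact hρ (τ k) this
    have : g = 1 := perm_eq_one_of_le g hge
    have key : ∀ j, ρ j = σ (τ.symm j) := by
      intro j
      have := congrArg (fun (e : Equiv.Perm (Fin n)) => σ (e (τ.symm j))) this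
      simpa [hg] using this
    exact Equiv.ext key

lemma exists_good_col {n : ℕ} (C : Matrix (Fin (n+1)) (Fin (n+1)) SB)
    (h : UniqPerm C 1) : ∃ j₀ : Fin (n+1), ∀ i, i ≠ j₀ → C i j₀ = SB.zero := by
  by_contra hc
  push_neg at hc
  choose f hfne hfC using hc
  set x : ℕ → Fin (n+1) := fun k => f^[k] 0 with hxdef
  have hx_succ : ∀ t, x (t+1) = f (x t) := by
    intro t; simp [hxdef, Function.iterate_succ_apply']
  -- pigeonhole: the iterates repeat
  have hex : ∃ b : ℕ, ∃ a, a < b ∧ x a = x b := by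
    obtain ⟨u, v, huv, heq⟩ := Fintype.exists_ne_map_eq_of_card_lt
      (fun k : Fin (n+2) => x k) (by simp)
    rcases lt_or_gt_of_ne (fun hh => huv (Fin.ext hh) : (u:ℕ) ≠ (v:ℕ)) with hlt | hlt
    · exact ⟨v, u, hlt, heq⟩
    · exact ⟨u, v, hlt, heq.symm⟩
  set b₀ := Nat.find hex with hb₀
  obtain ⟨a, hab, hxab⟩ : ∃ a, a < b₀ ∧ x a = x b₀ := Nat.find_spec hex
  have hmin : ∀ m, m < b₀ → ¬∃ a', a' < m ∧ x a' = x m := fun m hm => Nat.find_min hex hm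
  have nodup : ∀ i j, i < j → j < b₀ → x i ≠ x j := by
    intro i j hij hj heq
    exact hmin j hj ⟨i, hij, heq⟩
  have inj' : ∀ s t, s < b₀ → t < b₀ → x s = x t → s = t := by
    intro s t hs ht heq
    rcases lt_trichotomy s t with hh | hh | hh
    · exact absurd heq (nodup s t hh ht)
    · exact hh
    · exact absurd heq.symm (nodup t s hh hs)
  set mem : Fin (n+1) → Prop := fun j => ∃ t ∈ Finset.Ico a b₀, x t = j with hmemdef
  have closure : ∀ j, mem j → mem (f j) := by
    rintro j ⟨t, ht, rfl⟩
    rw [Finset.mem_Ico] at ht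
    rcases eq_or_lt_of_le (Nat.succ_le_of_lt ht.2) with heq | hlt
    · exact ⟨a, Finset.mem_Ico.2 ⟨le_refl a, hab⟩, by rw [hxab, ← heq, hx_succ]⟩
    · exact ⟨t+1, Finset.mem_Ico.2 ⟨le_trans ht.1 (Nat.le_succ t), hlt⟩, hx_succ t⟩
  set ρfun : Fin (n+1) → Fin (n+1) := fun j => if mem j then f j else j with hρdef
  have hρ_mem : ∀ j, mem j → ρfun j = f j := fun j hj => if_pos hj
  have hρ_not : ∀ j, ¬mem j → ρfun j = j := fun j hj => if_neg hj
  -- injectivity of f on the cycle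
  have finj : ∀ u v, mem u → mem v → f u = f v → u = v := by
    rintro u v ⟨s, hs, rfl⟩ ⟨t, ht, rfl⟩ heq
    rw [Finset.mem_Ico] at hs ht
    rw [← hx_succ, ← hx_succ] at heq
    have norm : ∀ w, a ≤ w → w < b₀ →
        ∃ w', w' < b₀ ∧ x w' = x (w+1) ∧ (w+1 = b₀ → w' = a) ∧ (w+1 ≠ b₀ → w' = w+1) := by
      intro w hw hwlt
      rcases eq_or_lt_of_le (Nat.succ_le_of_lt hwlt) with heq' | hlt'
      · exact ⟨a, hab, by rw [hxab]; exact congrArg x heq'.symm,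
          fun _ => rfl, fun hne => absurd heq' hne⟩
      · exact ⟨w+1, hlt', rfl, fun hh => absurd hh (Nat.ne_of_lt hlt'), fun _ => rfl⟩
    obtain ⟨s', hs'lt, hs'eq, hs'b, hs'nb⟩ := norm s hs.1 hs.2
    obtain ⟨t', ht'lt, ht'eq, ht'b, ht'nb⟩ := norm t ht.1 ht.2
    have : s' = t' := inj' s' t' hs'lt ht'lt (by rw [hs'eq, ht'eq, heq])
    by_cases hsb : s+1 = b₀ <;> by_cases htb : t+1 = b₀
    · exact congrArg x (by omega)
    · exfalso
      rw [hs'b hsb, ht'nb htb] at this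
      omega
    · exfalso
      rw [hs'nb hsb, ht'b htb] at this
      omega
    · rw [hs'nb hsb, ht'nb htb] at this
      exact congrArg x (by omega)
  have hinj : Function.Injective ρfun := by
    intro u v heq
    by_cases hu : mem u <;> by_cases hv : mem v
    · rw [hρ_mem u hu, hρ_mem v hv] at heq
      exact finj u v hu hv heq
    · rw [hρ_mem u hu, hρ_not v hv] at heq
      exact absurd (heq ▸ closure u hu) hv
    · rw [hρ_not u hu, hρ_mem v hv] at heq
      exact absurd (heq ▸ closure v hv) hu
    · rwa [hρ_not u hu, hρ_not v hv] at heq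
  have hbij := Finite.injective_iff_bijective.1 hinj
  set ρ : Equiv.Perm (Fin (n+1)) := Equiv.ofBijective ρfun hbij with hρ
  have hρapp : ∀ j, ρ j = ρfun j := fun j => rfl
  have hρC : ∀ j, C (ρ j) j ≠ SB.zero := by
    intro j
    by_cases hj : mem j
    · rw [hρapp, hρ_mem j hj]; exact hfC j
    · rw [hρapp, hρ_not j hj]
      have := h.1 j
      simp only [Equiv.Perm.one_apply] at this
      rw [this]
      decide
  have hρ1 : ρ = 1 := h.2 ρ hρC
  have hmema : mem (x a) := ⟨a, Finset.mem_Ico.2 ⟨le_refl a, hab⟩, rfl⟩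
  have : ρ (x a) = x a := by rw [hρ1]; rfl
  rw [hρapp, hρ_mem _ hmema] at this
  exact hfne (x a) this

lemma triangular_of_uniq_one : ∀ (n : ℕ) (C : Matrix (Fin n) (Fin n) SB), UniqPerm C 1 →
    ∃ σ τ : Equiv.Perm (Fin n),
      (∀ i, C (σ i) (τ i) = SB.one) ∧ (∀ i j, i < j → C (σ i) (τ j) = SB.zero) := by
  intro n
  induction n with
  | zero => exact fun C _ => ⟨1, 1, fun i => i.elim0, fun i => i.elim0⟩
  | succ n ih =>
    intro C h
    obtain ⟨j₀, hcol⟩ := exists_good_col C h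
    set C' : Matrix (Fin n) (Fin n) SB :=
      fun i j => C (j₀.succAbove i) (j₀.succAbove j) with hC'
    have hdiag : ∀ k : Fin (n+1), C k k = SB.one := by
      intro k; have := h.1 k; simpa using this
    have h' : UniqPerm C' 1 := by
      constructor
      · intro j; simpa [hC'] using hdiag (j₀.succAbove j)
      · intro ρ' hρ'
        set ρ : Equiv.Perm (Fin (n+1)) :=
          (finSuccEquiv' j₀).trans ((Equiv.optionCongr ρ').trans (finSuccEquiv' j₀).symm) with hρ
        have hρj₀ : ρ j₀ = j₀ := by
          simp [hρ, finSuccEquiv'_at, finSuccEquiv'_symm_none]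
        have hρsa : ∀ j, ρ (j₀.succAbove j) = j₀.succAbove (ρ' j) := by
          intro j
          simp [hρ, finSuccEquiv'_succAbove, finSuccEquiv'_symm_some]
        have hρC : ∀ k, C (ρ k) k ≠ SB.zero := by
          intro k
          rcases eq_or_ne k j₀ with rfl | hk
          · rw [hρj₀, hdiag]; decide
          · obtain ⟨j, rfl⟩ := Fin.exists_succAbove_eq (Ne.symm hk).symm
            rw [hρsa]
            exact hρ' j
        have : ρ = 1 := h.2 ρ hρC
        ext j
        have h1 : ρ (j₀.succAbove j) = j₀.succAbove j := by rw [this]; rfl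
        rw [hρsa] at h1
        have := Fin.succAbove_right_injective h1
        simp [this]
    obtain ⟨σ', τ', hd', hu'⟩ := ih C' h'
    set σ : Equiv.Perm (Fin (n+1)) :=
      (finSuccEquiv' (Fin.last n)).trans ((Equiv.optionCongr σ').trans (finSuccEquiv' j₀).symm) with hσ
    set τ : Equiv.Perm (Fin (n+1)) :=
      (finSuccEquiv' (Fin.last n)).trans ((Equiv.optionCongr τ').trans (finSuccEquiv' j₀).symm) with hτ
    have hσlast : σ (Fin.last n) = j₀ := by
      simp [hσ, finSuccEquiv'_at, finSuccEquiv'_symm_none]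
    have hτlast : τ (Fin.last n) = j₀ := by
      simp [hτ, finSuccEquiv'_at, finSuccEquiv'_symm_none]
    have hσcast : ∀ i : Fin n, σ (Fin.castSucc i) = j₀.succAbove (σ' i) := by
      intro i
      simp [hσ, finSuccEquiv'_last_apply_castSucc, finSuccEquiv'_symm_some]
    have hτcast : ∀ i : Fin n, τ (Fin.castSucc i) = j₀.succAbove (τ' i) := by
      intro i
      simp [hτ, finSuccEquiv'_last_apply_castSucc, finSuccEquiv'_symm_some]
    refine ⟨σ, τ, ?_, ?_⟩
    · intro i
      rcases eq_or_ne i (Fin.last n) with rfl | hi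
      · rw [hσlast, hτlast]; exact hdiag j₀
      · obtain ⟨i', rfl⟩ := Fin.exists_castSucc_eq.2 hi
        rw [hσcast, hτcast]
        exact hd' i'
    · intro i j hij
      rcases eq_or_ne j (Fin.last n) with rfl | hj
      · have hi : i ≠ Fin.last n := ne_of_lt hij
        obtain ⟨i', rfl⟩ := Fin.exists_castSucc_eq.2 hi
        rw [hσcast, hτlast]
        exact hcol _ (Fin.succAbove_ne j₀ (σ' i'))
      · obtain ⟨j', rfl⟩ := Fin.exists_castSucc_eq.2 hj
        have hi : i ≠ Fin.last n := by
          intro hh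
          rw [hh] at hij
          exact absurd hij (not_lt.2 (Fin.le_last _))
        obtain ⟨i', rfl⟩ := Fin.exists_castSucc_eq.2 hi
        rw [hσcast, hτcast]
        exact hu' i' j' (Fin.castSucc_lt_castSucc_iff.1 hij)


/-- An `n × n` superboolean matrix is nonsingular iff independently permuting rows
and columns brings it to lower-triangular form with `1`s on the diagonal and `0`s
strictly above the diagonal. -/
theorem nonsingular_iff_triangular {n : ℕ} (A : Matrix (Fin n) (Fin n) SB) :
    Nonsingular A ↔ ∃ σ τ : Equiv.Perm (Fin n),
      (∀ i : Fin n, A (σ i) (τ i) = SB.one) ∧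
      (∀ i j : Fin n, i < j → A (σ i) (τ j) = SB.zero) := by
  rw [Nonsingular, sbPer_eq_one_iff]
  constructor
  · rintro ⟨π, h⟩
    set C : Matrix (Fin n) (Fin n) SB := fun i j => A (π i) j with hC
    have hC1 : UniqPerm C 1 := by
      constructor
      · intro i
        simpa [hC] using h.1 i
      · intro ρ hρ
        have : ρ.trans π = π := h.2 (ρ.trans π) (fun i => hρ i)
        ext j
        have := congrArg (fun e : Equiv.Perm (Fin n) => e j) this
        simp only [Equiv.trans_apply] at this
        exact congrArg Fin.val (π.injective this)
    obtain ⟨σ, τ, hd, hu⟩ := triangular_of_uniq_one n C hC1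
    exact ⟨σ.trans π, τ, fun i => hd i, fun i j hij => hu i j hij⟩
  · rintro ⟨σ, τ, hd, hu⟩
    exact ⟨_, uniq_of_triangular A σ τ hd hu⟩
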